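/- Let q = 4 and n = 1 + 3·q^a + q^e + 2·q^{e+a} with e, a positive integers. Then g_{n,q} ≡ X^{q^a} + S_e + S_a²S_e² + S_aS_e³ (mod X^{q^e} − X). If 2 | e and gcd(e, 2a+1) = 1, then g_{n,q} is a permutation polynomial of F_{q^e}. -/

import Mathlib

set_option maxHeartbeats 1000000
set_option linter.unusedSectionVars false

open Polynomial Finset

section Aux

variable {R : Type*} [CommRing R] [CharP R 2]

private lemma aux_pow4add (x y : R) (k : ℕ) : (x + y) ^ 4 ^ k = x ^ 4 ^ k + y ^ 4 ^ k := by
  haveI : Fact (Nat.Prime 2) := ⟨Nat.prime_two⟩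
  rw [show (4:ℕ) ^ k = 2 ^ (2 * k) by rw [pow_mul]; norm_num, add_pow_char_pow]

private lemma aux_pow4sub (x y : R) (k : ℕ) : (x - y) ^ 4 ^ k = x ^ 4 ^ k - y ^ 4 ^ k := by
  haveI : Fact (Nat.Prime 2) := ⟨Nat.prime_two⟩
  rw [show (4:ℕ) ^ k = 2 ^ (2 * k) by rw [pow_mul]; norm_num, sub_pow_char_pow]

private lemma aux_sumpow2 {ι : Type*} (s : Finset ι) (f : ι → R) (k : ℕ) :
    (∑ i ∈ s, f i) ^ 2 ^ k = ∑ i ∈ s, f i ^ 2 ^ k := by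
  haveI : Fact (Nat.Prime 2) := ⟨Nat.prime_two⟩
  exact sum_pow_char_pow 2 k s f

private lemma aux_sumpow4 {ι : Type*} (s : Finset ι) (f : ι → R) :
    (∑ i ∈ s, f i) ^ (4:ℕ) = ∑ i ∈ s, f i ^ (4:ℕ) := by
  have h := aux_sumpow2 s f 2
  norm_num at h
  exact h

private lemma aux_tele (x : R) (k : ℕ) :
    ∑ i ∈ Finset.range k, (x ^ 4 - x) ^ 4 ^ i = x ^ 4 ^ k - x := by
  induction k with
  | zero => simp
  | succ k ih =>
    rw [Finset.sum_range_succ, ih, aux_pow4sub, ← pow_mul,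
      show 4 * 4 ^ k = 4 ^ (k + 1) by rw [pow_succ]; ring]
    ring

private lemma aux_t4k (t : R) (ht : t ^ 4 = t) (k : ℕ) : t ^ 4 ^ k = t := by
  induction k with
  | zero => simp
  | succ k ih => rw [pow_succ, pow_mul, ih, ht]

private def P34 (u v w z : R) : R :=
  (u*v^3 + 3*u*v^2*w + 6*u*v^2*z + 6*u*v*w*z + 3*u*v*z^2 + u*w*z^2 + v^3*w + 2*v^3*z
    + 6*v^2*w*z + 3*v^2*z^2 + 3*v*w*z^2)
  + (u + 3*v + w + 2*z)

private lemma aux_sum {σ : Type*} [Fintype σ] (φ : σ → R) (u v w z : R)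
    (h0 : ∑ _c : σ, (1:R) = 0)
    (h1 : ∑ c : σ, φ c = 0) (h2 : ∑ c : σ, φ c ^ 2 = 0) (h3 : ∑ c : σ, φ c ^ 3 = 1)
    (h4 : ∑ c : σ, φ c ^ 4 = 0) (h5 : ∑ c : σ, φ c ^ 5 = 0) (h6 : ∑ c : σ, φ c ^ 6 = 1)
    (h7 : ∑ c : σ, φ c ^ 7 = 0) :
    ∑ c : σ, (u + φ c) * (v + φ c) ^ 3 * (w + φ c) * (z + φ c) ^ 2 = P34 u v w z := by
  have step : ∀ c : σ, (u + φ c) * (v + φ c) ^ 3 * (w + φ c) * (z + φ c) ^ 2 =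
      (u*v^3*w*z^2) * 1
      + (2*u*v^3*w*z + u*v^3*z^2 + 3*u*v^2*w*z^2 + v^3*w*z^2) * φ c
      + (u*v^3*w + 2*u*v^3*z + 6*u*v^2*w*z + 3*u*v^2*z^2 + 3*u*v*w*z^2 + 2*v^3*w*z
          + v^3*z^2 + 3*v^2*w*z^2) * φ c ^ 2
      + (u*v^3 + 3*u*v^2*w + 6*u*v^2*z + 6*u*v*w*z + 3*u*v*z^2 + u*w*z^2 + v^3*w + 2*v^3*z
          + 6*v^2*w*z + 3*v^2*z^2 + 3*v*w*z^2) * φ c ^ 3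
      + (3*u*v^2 + 3*u*v*w + 6*u*v*z + 2*u*w*z + u*z^2 + v^3 + 3*v^2*w + 6*v^2*z + 6*v*w*z
          + 3*v*z^2 + w*z^2) * φ c ^ 4
      + (3*u*v + u*w + 2*u*z + 3*v^2 + 3*v*w + 6*v*z + 2*w*z + z^2) * φ c ^ 5
      + (u + 3*v + w + 2*z) * φ c ^ 6
      + 1 * φ c ^ 7 := fun c => by ring
  rw [Finset.sum_congr rfl fun c _ => step c]
  simp only [Finset.sum_add_distrib, ← Finset.mul_sum]
  rw [h0, h1, h2, h3, h4, h5, h6, h7]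
  unfold P34
  ring

private lemma aux_final (h2 : (2:R) = 0) (u v w z : R) :
    u ^ 4 - u + (v - u) + (w - u) + (z - u) ^ 2 * ((v - u) ^ 2 + (v - u) * (w - u))
      + (w - u) * (v - u) ^ 3 = P34 u v w z := by
  unfold P34
  linear_combination (2*u^4 - 3*u^3*v - u^3*w - 2*u^3*z + 2*u^2*v^2 + 2*u^2*v*w + 3*u^2*v*z
    + u^2*w*z + u^2*z^2 - u*v^3 - 3*u*v^2*w - 4*u*v^2*z - 4*u*v*w*z - 3*u*v*z^2 - u*w*z^2
    - 2*u - v^3*z - 3*v^2*w*z - v^2*z^2 - v*w*z^2 - v - z) * h2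

private lemma aux_GT (h2 : (2:R) = 0) (x s t r P : R) (hW : s ^ 4 - s = P - x) :
    (x + s + t + r ^ 2 * (s ^ 2 + s * t) + t * s ^ 3) - (P + t + s ^ 2 * t ^ 2 + s * t ^ 3)
      = (r - t - s) * ((r - t - s) * (s ^ 2 + s * t)) := by
  linear_combination hW + (-s^4 - s^3*t + s^3*r - 2*s^2*t^2 + 2*s^2*t*r - s*t^3 + s*t^2*r + s) * h2

end Aux

private def sf {E : Type*} [CommRing E] (m : ℕ) (x : E) : E := ∑ i ∈ Finset.range m, x ^ 4 ^ i

theorem stmt14 (e a : ℕ) (he : 0 < e) (ha : 0 < a)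
    (E : Type*) [Field E] [Fintype E] (hE : Fintype.card E = 4 ^ e)
    (F4 : Subfield E) [Fintype F4] (hF4 : Fintype.card F4 = 4)
    (n : ℕ) (hn : n = 1 + 3 * 4 ^ a + 4 ^ e + 2 * 4 ^ (e + a))
    (g : Polynomial E)
    (hg : ∑ c : F4, (X + C (c : E)) ^ n = g.comp (X ^ 4 - X))
    (S : ℕ → Polynomial E) (hS : ∀ d, S d = ∑ i ∈ Finset.range d, X ^ 4 ^ i) :
    (X ^ 4 ^ e - X) ∣ g - (X ^ 4 ^ a + S e + S a ^ 2 * S e ^ 2 + S a * S e ^ 3) ∧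
    (2 ∣ e → Nat.gcd e (2 * a + 1) = 1 → Function.Bijective fun x : E => g.eval x) := by
  classical
  -- characteristic 2
  haveI hchar2 : CharP E 2 := by
    haveI := ringChar.charP E
    obtain ⟨m, hp, hc⟩ := FiniteField.card E (ringChar E)
    have hcc : ringChar E ^ (m:ℕ) = 2 ^ (2*e) := by
      rw [← hc, hE, pow_mul]; norm_num
    have hdvd2 : ringChar E ∣ 2 := by
      refine hp.dvd_of_dvd_pow (n := 2*e) ?_
      rw [← hcc]
      exact dvd_pow_self _ m.pos.ne'
    have h2 : ringChar E = 2 := (Nat.prime_dvd_prime_iff_eq hp Nat.prime_two).mp hdvd2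
    rw [← h2]
    exact ringChar.charP E
  have h2E : (2:E) = 0 := by exact_mod_cast CharP.cast_eq_zero E 2
  have h2X : (2:E[X]) = 0 := by exact_mod_cast CharP.cast_eq_zero E[X] 2
  -- F4 coercion facts
  have hc4 : ∀ c : F4, ((c:E)) ^ 4 = (c:E) := by
    intro c
    have h := FiniteField.pow_card c
    rw [hF4] at h
    exact_mod_cast congrArg (fun z : F4 => (z : E)) h
  have hc4k : ∀ (c : F4) (k : ℕ), ((c:E)) ^ 4 ^ k = (c:E) := fun c k => aux_t4k _ (hc4 c) k
  have hXc : ∀ (c : F4) (k : ℕ), (X + C (c:E)) ^ 4 ^ k = X ^ 4 ^ k + C (c:E) := by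
    intro c k
    rw [aux_pow4add, ← map_pow, hc4k]
  -- power sums over F4
  have hcast : ∀ k : ℕ, (∑ c : F4, c ^ k = (0:F4)) → ∑ c : F4, ((c:E)) ^ k = 0 := by
    intro k h
    have h2 := congrArg (fun z : F4 => (z:E)) h
    push_cast at h2
    exact h2
  have hσ1 : ∑ c : F4, ((c:E)) = 0 := by
    have h := hcast 1 (FiniteField.sum_pow_lt_card_sub_one F4 1 (by rw [hF4]; norm_num))
    simpa using h
  have hσ2 : ∑ c : F4, ((c:E)) ^ 2 = 0 :=
    hcast 2 (FiniteField.sum_pow_lt_card_sub_one F4 2 (by rw [hF4]; norm_num))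
  have hσ3 : ∑ c : F4, ((c:E)) ^ 3 = 1 := by
    have hstep : ∀ c : F4, c ≠ 0 → ((c:E)) ^ 3 = 1 := by
      intro c hc
      have h := FiniteField.pow_card_sub_one_eq_one c hc
      rw [hF4] at h
      norm_num at h
      exact_mod_cast congrArg (fun z : F4 => (z : E)) h
    rw [← Finset.add_sum_erase _ _ (Finset.mem_univ (0:F4)),
      Finset.sum_congr rfl (fun c hc => hstep c (Finset.ne_of_mem_erase hc)),
      Finset.sum_const, Finset.card_erase_of_mem (Finset.mem_univ _), Finset.card_univ, hF4]
    norm_num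
    linear_combination h2E
  have hσ4 : ∑ c : F4, ((c:E)) ^ 4 = 0 := by
    rw [Finset.sum_congr rfl fun c _ => hc4 c]; exact hσ1
  have hσ5 : ∑ c : F4, ((c:E)) ^ 5 = 0 := by
    rw [Finset.sum_congr rfl fun (c : F4) _ => show ((c:E))^5 = ((c:E))^2 by
      linear_combination (c:E) * hc4 c]
    exact hσ2
  have hσ6 : ∑ c : F4, ((c:E)) ^ 6 = 1 := by
    rw [Finset.sum_congr rfl fun (c : F4) _ => show ((c:E))^6 = ((c:E))^3 by
      linear_combination ((c:E))^2 * hc4 c]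
    exact hσ3
  have hσ7 : ∑ c : F4, ((c:E)) ^ 7 = 0 := by
    rw [Finset.sum_congr rfl fun (c : F4) _ => show ((c:E))^7 = ((c:E)) by
      linear_combination (((c:E))^3 + 1) * hc4 c]
    exact hσ1
  have h0' : ∑ _c : F4, (1:E[X]) = 0 := by
    rw [Finset.sum_const, Finset.card_univ, hF4, nsmul_eq_mul, mul_one]
    push_cast
    linear_combination 2 * h2X
  have h1' : ∑ c : F4, C ((c:E)) = 0 := by
    rw [← map_sum, hσ1, map_zero]
  have hCp : ∀ k : ℕ, (∑ c : F4, ((c:E)) ^ k = 0) → ∑ c : F4, (C ((c:E))) ^ k = 0 := by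
    intro k h
    simp only [← map_pow]
    rw [← map_sum, h, map_zero]
  have hCp1 : ∀ k : ℕ, (∑ c : F4, ((c:E)) ^ k = 1) → ∑ c : F4, (C ((c:E))) ^ k = 1 := by
    intro k h
    simp only [← map_pow]
    rw [← map_sum, h, map_one]
  have hsum := aux_sum (fun c : F4 => C ((c:E))) X (X ^ 4 ^ a) (X ^ 4 ^ e) (X ^ 4 ^ (e+a))
    h0' h1' (hCp 2 hσ2) (hCp1 3 hσ3) (hCp 4 hσ4) (hCp 5 hσ5) (hCp1 6 hσ6) (hCp 7 hσ7)
  have hprod : ∑ c : F4, (X + C (c : E)) ^ n =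
      ∑ c : F4, (X + C (c:E)) * (X ^ 4 ^ a + C (c:E)) ^ 3 * (X ^ 4 ^ e + C (c:E))
        * (X ^ 4 ^ (e+a) + C (c:E)) ^ 2 := by
    refine Finset.sum_congr rfl fun c _ => ?_
    rw [hn, pow_add, pow_add, pow_add, pow_one, pow_mul', pow_mul',
      hXc c a, hXc c e, hXc c (e+a)]
  have hcompg : g.comp (X ^ 4 - X) = P34 X (X ^ 4 ^ a) (X ^ 4 ^ e) (X ^ 4 ^ (e+a)) :=
    hg.symm.trans (hprod.trans hsum)
  have hScomp : ∀ k, (S k).comp (X ^ 4 - X) = X ^ 4 ^ k - X := by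
    intro k
    rw [hS k, Polynomial.sum_comp]
    simp only [pow_comp, X_comp]
    exact aux_tele X k
  have hGcomp : (X + S a + S e + S (e+a) ^ 2 * (S a ^ 2 + S a * S e) + S e * S a ^ 3).comp
      (X ^ 4 - X) = P34 X (X ^ 4 ^ a) (X ^ 4 ^ e) (X ^ 4 ^ (e+a)) := by
    simp only [add_comp, mul_comp, pow_comp, X_comp, hScomp]
    exact aux_final h2X X (X ^ 4 ^ a) (X ^ 4 ^ e) (X ^ 4 ^ (e+a))
  have hgG : g = X + S a + S e + S (e+a) ^ 2 * (S a ^ 2 + S a * S e) + S e * S a ^ 3 := by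
    have h0 : (g - (X + S a + S e + S (e+a) ^ 2 * (S a ^ 2 + S a * S e) + S e * S a ^ 3)).comp
        (X ^ 4 - X) = 0 := by
      rw [sub_comp, hcompg, hGcomp, sub_self]
    rcases comp_eq_zero_iff.mp h0 with h | ⟨_, h⟩
    · exact sub_eq_zero.mp h
    · exfalso
      have hc := congrArg (fun p : E[X] => p.coeff 4) h
      simp [coeff_X, coeff_C] at hc
  have hW : S a ^ 4 - S a = X ^ 4 ^ a - X := by
    rw [hS a, ← aux_tele (X : E[X]) a, aux_sumpow4, ← Finset.sum_sub_distrib]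
    refine Finset.sum_congr rfl fun i _ => ?_
    rw [aux_pow4sub, ← pow_mul, ← pow_mul, Nat.mul_comm]
  have hD : S (e+a) - S e - S a = ∑ i ∈ Finset.range a, (X ^ 4 ^ e - X) ^ 4 ^ i := by
    rw [hS (e+a), hS e, hS a, Finset.sum_range_add, add_sub_cancel_left,
      ← Finset.sum_sub_distrib]
    refine Finset.sum_congr rfl fun i _ => ?_
    rw [aux_pow4sub, ← pow_mul, pow_add]
  have hDdvd : (X ^ 4 ^ e - X : E[X]) ∣ (S (e+a) - S e - S a) := by
    rw [hD]
    exact Finset.dvd_sum fun i _ => dvd_pow_self _ (by positivity : (0:ℕ) < 4 ^ i).ne'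
  have part1 : (X ^ 4 ^ e - X) ∣ g - (X ^ 4 ^ a + S e + S a ^ 2 * S e ^ 2 + S a * S e ^ 3) := by
    rw [hgG, aux_GT h2X X (S a) (S e) (S (e+a)) (X ^ 4 ^ a) hW]
    exact hDdvd.mul_right _
  refine ⟨part1, ?_⟩
  intro h2e hgcd
  -- Part 2 : the permutation property
  have hqE : ∀ x : E, x ^ 4 ^ e = x := fun x => by
    have h := FiniteField.pow_card x
    rwa [hE] at h
  obtain ⟨kq, hkq⟩ := part1
  have heval : ∀ x : E, g.eval x
      = x ^ 4 ^ a + sf e x + (sf a x) ^ 2 * (sf e x) ^ 2 + sf a x * (sf e x) ^ 3 := by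
    intro x
    have h1 := congrArg (Polynomial.eval x) hkq
    simp only [eval_sub, eval_mul, eval_add, eval_pow, eval_X] at h1
    rw [hqE x, sub_self, zero_mul, sub_eq_zero] at h1
    rw [h1]
    simp only [hS, eval_add, eval_mul, eval_pow, eval_X, eval_finset_sum]
    rfl
  -- lemmas about sf
  have sf_add : ∀ (m : ℕ) (x y : E), sf m (x + y) = sf m x + sf m y := by
    intro m x y
    unfold sf
    rw [← Finset.sum_add_distrib]
    exact Finset.sum_congr rfl fun i _ => aux_pow4add x y i
  have sf_sub : ∀ (m : ℕ) (x y : E), sf m (x - y) = sf m x - sf m y := by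
    intro m x y
    unfold sf
    rw [← Finset.sum_sub_distrib]
    exact Finset.sum_congr rfl fun i _ => aux_pow4sub x y i
  have hsf0 : ∀ m : ℕ, sf m (0:E) = 0 :=
    fun m => Finset.sum_eq_zero fun i _ => zero_pow (by positivity : (0:ℕ) < 4 ^ i).ne'
  have hsf_succ : ∀ (m : ℕ) (x : E), sf (m+1) x = sf m x + x ^ 4 ^ m :=
    fun m x => Finset.sum_range_succ _ _
  have htr4 : ∀ x : E, sf e (x ^ 4) = sf e x := by
    intro x
    have h1 : sf e (x ^ 4) = ∑ i ∈ Finset.range e, x ^ 4 ^ (i+1) := by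
      unfold sf
      exact Finset.sum_congr rfl fun i _ => by
        rw [← pow_mul, show 4 * 4 ^ i = 4 ^ (i+1) by rw [pow_succ]; ring]
    have h2 : ∑ j ∈ Finset.range (e+1), x ^ 4 ^ j
        = (∑ i ∈ Finset.range e, x ^ 4 ^ (i+1)) + x ^ 4 ^ 0 := Finset.sum_range_succ' _ _
    have h3 : ∑ j ∈ Finset.range (e+1), x ^ 4 ^ j
        = (∑ j ∈ Finset.range e, x ^ 4 ^ j) + x ^ 4 ^ e := Finset.sum_range_succ _ _
    rw [hqE x] at h3
    have h4 : (∑ i ∈ Finset.range e, x ^ 4 ^ (i+1)) + x ^ 4 ^ 0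
        = (∑ j ∈ Finset.range e, x ^ 4 ^ j) + x := by rw [← h2, h3]
    rw [show x ^ (4:ℕ) ^ 0 = x from by norm_num] at h4
    rw [h1]
    exact add_right_cancel h4
  have htrfrob : ∀ (x : E) (k : ℕ), sf e (x ^ 4 ^ k) = sf e x := by
    intro x k
    induction k with
    | zero => norm_num
    | succ k ih => rw [pow_succ, pow_mul, htr4, ih]
  have hsf_pow : ∀ (m j : ℕ) (t z : E), t ^ 4 = t → sf m (t ^ j * z) = t ^ j * sf m z := by
    intro m j t z ht
    unfold sf
    rw [Finset.mul_sum]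
    refine Finset.sum_congr rfl fun i _ => ?_
    rw [mul_pow]
    congr 1
    rw [← pow_mul, Nat.mul_comm j (4 ^ i), pow_mul, aux_t4k t ht i]
  have hsf_sq : ∀ (m : ℕ) (z : E), sf m (z ^ 2) = (sf m z) ^ 2 := by
    intro m z
    unfold sf
    have h := aux_sumpow2 (Finset.range m) (fun i => z ^ 4 ^ i) 1
    simp only [pow_one] at h
    rw [h]
    refine Finset.sum_congr rfl fun i _ => ?_
    rw [← pow_mul, ← pow_mul, Nat.mul_comm]
  have htr_sf : ∀ (m : ℕ) (x : E), sf e (sf m x) = m • sf e x := by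
    intro m x
    induction m with
    | zero =>
      rw [show sf 0 x = (0:E) from by unfold sf; exact Finset.sum_range_zero _, hsf0, zero_smul]
    | succ m ih => rw [hsf_succ, sf_add, ih, htrfrob, succ_nsmul]
  have hyy : ∀ y : E, y + y = 0 := fun y => by linear_combination y * h2E
  have htrt : ∀ x : E, (sf e x) ^ 4 = sf e x := by
    intro x
    unfold sf
    rw [aux_sumpow4]
    have h : ∑ i ∈ Finset.range e, (x ^ 4 ^ i) ^ (4:ℕ)
        = ∑ i ∈ Finset.range e, (x ^ 4) ^ 4 ^ i :=
      Finset.sum_congr rfl fun i _ => by rw [← pow_mul, ← pow_mul, Nat.mul_comm]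
    rw [h]
    exact htr4 x
  have htr0 : ∀ t : E, t ^ 4 = t → sf e t = 0 := by
    intro t ht
    unfold sf
    rw [Finset.sum_congr rfl fun i _ => aux_t4k t ht i, Finset.sum_const, Finset.card_range]
    obtain ⟨m2, hm2⟩ := h2e
    rw [hm2, Nat.two_mul, add_nsmul]
    exact hyy _
  -- the map preserves the trace
  have htrx : ∀ x : E,
      sf e (x ^ 4 ^ a + sf e x + (sf a x) ^ 2 * (sf e x) ^ 2 + sf a x * (sf e x) ^ 3)
        = sf e x := by
    intro x
    rw [sf_add, sf_add, sf_add, htrfrob x a, htr0 (sf e x) (htrt x),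
      show (sf a x) ^ 2 * (sf e x) ^ 2 = (sf e x) ^ 2 * (sf a x) ^ 2 from mul_comm _ _,
      show sf a x * (sf e x) ^ 3 = (sf e x) ^ 3 * sf a x from mul_comm _ _,
      hsf_pow e 2 (sf e x) ((sf a x)^2) (htrt x),
      hsf_pow e 3 (sf e x) (sf a x) (htrt x),
      hsf_sq e (sf a x), htr_sf a x]
    rcases Nat.even_or_odd a with hae | hao
    · obtain ⟨m2, hm2⟩ := hae
      rw [hm2, add_nsmul, hyy (m2 • sf e x)]
      ring
    · obtain ⟨m2, hm2⟩ := hao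
      have hz : (2*m2) • sf e x = 0 := by
        rw [Nat.two_mul, add_nsmul]; exact hyy _
      rw [hm2, add_nsmul, one_nsmul, hz, zero_add]
      linear_combination (sf e x) ^ 4 * h2E
  -- injectivity
  have hinj : Function.Injective fun x : E => g.eval x := by
    intro x y hxy0
    have hxy : g.eval x = g.eval y := hxy0
    rw [heval x, heval y] at hxy
    have htteq : sf e x = sf e y := by
      have hh1 := htrx x
      have hh2 := htrx y
      rw [hxy] at hh1
      exact hh1.symm.trans hh2
    set t := sf e x with htdef
    have hty : sf e y = t := htteq.symm
    rw [hty] at hxy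
    have ht4 : t ^ 4 = t := htrt x
    have hd : (x - y) ^ 4 ^ a + t^2 * (sf a (x - y))^2 + t^3 * (sf a (x - y)) = 0 := by
      rw [sf_sub, aux_pow4sub]
      linear_combination hxy + (t^2 * ((sf a y)^2 - sf a x * sf a y)) * h2E
    by_cases ht0 : t = 0
    · rw [ht0] at hd
      norm_num at hd
      exact sub_eq_zero.mp hd
    · have ht3 : t ^ 3 = 1 := by
        have hcan : t * t ^ 3 = t * 1 := by rw [mul_one]; linear_combination ht4
        exact mul_left_cancel₀ ht0 hcan
      set d := x - y with hddef
      set x0 := t^2 * d with hx0def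
      have ht4k : ∀ k : ℕ, t ^ 4 ^ k = t := aux_t4k t ht4
      have htt : ∀ m : ℕ, (t^2 : E) ^ 4 ^ m = t ^ 2 := fun m => by
        rw [← pow_mul, Nat.mul_comm 2 (4^m), pow_mul, ht4k m]
      have hx0even : ∀ m : ℕ, x0 ^ 2 ^ (2*m) = t^2 * d ^ 4 ^ m := by
        intro m
        rw [hx0def, mul_pow, show (2:ℕ) ^ (2*m) = 4 ^ m by rw [pow_mul]; norm_num]
        congr 1
        exact htt m
      have hx0odd : ∀ m : ℕ, x0 ^ 2 ^ (2*m+1) = t * (d ^ 4 ^ m) ^ 2 := by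
        intro m
        rw [hx0def, mul_pow, show (2:ℕ) ^ (2*m+1) = 4 ^ m * 2 by
          rw [pow_succ, pow_mul]; norm_num]
        rw [pow_mul, pow_mul]
        congr 1
        rw [htt m]
        linear_combination ht4
      have hB : ∀ m : ℕ, ∑ j ∈ Finset.range (2*m), x0 ^ 2 ^ j
          = t * (sf m d)^2 + t^2 * sf m d := by
        intro m
        induction m with
        | zero =>
          rw [show 2*0 = 0 from rfl, Finset.sum_range_zero,
            show sf 0 d = (0:E) from by unfold sf; exact Finset.sum_range_zero _]
          ring
        | succ m ih =>
          rw [show 2*(m+1) = 2*m+1+1 from by ring, Finset.sum_range_succ,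
            Finset.sum_range_succ, ih, hsf_succ, hx0even, hx0odd]
          linear_combination (-(t * sf m d * d ^ 4 ^ m)) * h2E
      have hT : ∑ j ∈ Finset.range (2*a+1), x0 ^ 2 ^ j = 0 := by
        rw [Finset.sum_range_succ, hB a, hx0even]
        linear_combination t^2 * hd - ((sf a d)^2 + sf a d * t) * ht4
      have hsq0 : ∑ j ∈ Finset.range (2*a+1), x0 ^ 2 ^ (j+1) = 0 := by
        have h := aux_sumpow2 (Finset.range (2*a+1)) (fun j => x0 ^ 2 ^ j) 1
        simp only [pow_one] at h
        rw [hT] at h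
        have h2c : ∑ j ∈ Finset.range (2*a+1), (x0 ^ 2 ^ j)^2
            = ∑ j ∈ Finset.range (2*a+1), x0 ^ 2 ^ (j+1) :=
          Finset.sum_congr rfl fun j _ => by rw [← pow_mul, ← pow_succ]
        rw [← h2c, ← h]
        norm_num
      have hT2 : x0 ^ 2 ^ (2*a+1) = x0 := by
        have h1 : ∑ j ∈ Finset.range (2*a+1+1), x0 ^ 2 ^ j = x0 ^ 2 ^ (2*a+1) := by
          rw [Finset.sum_range_succ, hT, zero_add]
        have h2 : ∑ j ∈ Finset.range (2*a+1+1), x0 ^ 2 ^ j = x0 := by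
          rw [Finset.sum_range_succ', hsq0, zero_add]
          norm_num
        exact h1.symm.trans h2
      have hx0e : x0 ^ 2 ^ (2*e) = x0 := by
        have h := hqE x0
        rwa [show (4:ℕ) ^ e = 2 ^ (2*e) by rw [pow_mul]; norm_num] at h
      have hiter : ∀ (u : E) (s k : ℕ), u ^ 2 ^ s = u → u ^ 2 ^ (s*k) = u := by
        intro u s k hu
        induction k with
        | zero => norm_num
        | succ k ih =>
          rw [show s*(k+1) = s*k + s from by ring, pow_add, pow_mul, ih, hu]
      have hcop : Nat.Coprime (2*a+1) (2*e) := by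
        have hc1 : Nat.Coprime (2*a+1) 2 :=
          Nat.coprime_comm.mp ((Nat.prime_two.coprime_iff_not_dvd).mpr (by omega))
        have hc2 : Nat.Coprime (2*a+1) e := Nat.coprime_comm.mp hgcd
        exact hc1.mul_right hc2
      obtain ⟨mm, -, hmm⟩ := Nat.exists_mul_mod_eq_one_of_coprime hcop (by omega)
      have hdm := Nat.div_add_mod ((2*a+1)*mm) (2*e)
      rw [hmm] at hdm
      have hit1 : x0 ^ 2 ^ ((2*a+1)*mm) = x0 := hiter x0 (2*a+1) mm hT2
      have hit2 : x0 ^ 2 ^ (2*e*(((2*a+1)*mm)/(2*e)) + 1) = x0 ^ 2 := by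
        rw [pow_succ, pow_mul, hiter x0 (2*e) _ hx0e]
      rw [hdm] at hit2
      have hx02 : x0 ^ 2 = x0 := hit2.symm.trans hit1
      have hfac : x0 * (x0 - 1) = 0 := by linear_combination hx02
      rcases mul_eq_zero.mp hfac with h | h
      · rw [hx0def] at h
        have hd0 : d = 0 := by
          rcases mul_eq_zero.mp h with h' | h'
          · exact absurd ((pow_eq_zero_iff (by norm_num : (2:ℕ) ≠ 0)).mp h') ht0
          · exact h'
        rw [hddef] at hd0
        exact sub_eq_zero.mp hd0
      · exfalso
        have hx01 : x0 = 1 := by linear_combination h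
        rw [hx01] at hT
        simp only [one_pow, Finset.sum_const, Finset.card_range, nsmul_eq_mul, mul_one] at hT
        push_cast at hT
        rw [h2E, zero_mul, zero_add] at hT
        exact one_ne_zero hT
  exact Finite.injective_iff_bijective.mp hinj
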